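/- Let g : ℝ × [0,1] → ℝ be bounded, measurable in x for each fixed ν, and continuous in ν for each fixed x. Set G(ν,x) := ∫_0^ν g(s,x) ds and 𝒥(ψ) := ∫_0^1 ( (1/2)|ψ'(x)|² − G(ψ(x),x) ) dx for ψ ∈ H¹₀([0,1]). Then the minimization problem admits a solution: there exists ψ* ∈ H¹₀([0,1]) such that 𝒥(ψ*) = inf_{ψ ∈ H¹₀([0,1])} 𝒥(ψ). -/

import Mathlib

open MeasureTheory

/-- Membership in `H¹₀([0,1])`: `ψ` vanishes at `0` and `1`, is absolutely continuous on
`[0,1]` (it is the integral of its derivative), and its derivative is square integrable. -/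
def MemH10 (ψ : ℝ → ℝ) : Prop :=
  ψ 0 = 0 ∧ ψ 1 = 0 ∧
    (∀ x ∈ Set.Icc (0 : ℝ) 1, ψ x = ∫ t in Set.Ioc 0 x, deriv ψ t) ∧
    IntegrableOn (fun x => deriv ψ x ^ 2) (Set.Ioo (0 : ℝ) 1)

/-- The energy functional `𝒥(ψ) := ∫_0^1 (½|ψ'(x)|² − G(ψ(x),x)) dx`,
with `G(ν,x) := ∫_0^ν g(s,x) ds`. -/
noncomputable def Jfun (g : ℝ → ℝ → ℝ) (ψ : ℝ → ℝ) : ℝ :=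
  ∫ x in Set.Ioo (0 : ℝ) 1, (1 / 2 * deriv ψ x ^ 2 - ∫ s in (0 : ℝ)..(ψ x), g s x)

open Set Filter Topology
open scoped RealInnerProductSpace ENNReal

noncomputable def μ01 : Measure ℝ := volume.restrict (Set.Ioo 0 1)

instance : IsFiniteMeasure μ01 :=
  ⟨by rw [μ01, Measure.restrict_apply_univ, Real.volume_Ioo]; norm_num⟩

lemma setint_eq (f : ℝ → ℝ) {x : ℝ} (hx : x ∈ Icc (0:ℝ) 1) :
    ∫ t in Ioc (0:ℝ) x ∩ Ioo 0 1, f t = ∫ t in Ioc (0:ℝ) x, f t := by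
  rcases eq_or_lt_of_le hx.2 with h1 | h1
  · subst h1
    rw [inter_eq_right.2 Ioo_subset_Ioc_self]
    exact setIntegral_congr_set Ioo_ae_eq_Ioc
  · have hsub : Ioc (0:ℝ) x ⊆ Ioo 0 1 := fun t ht => ⟨ht.1, lt_of_le_of_lt ht.2 h1⟩
    rw [inter_eq_left.2 hsub]

lemma primitive_indicator_eq (f : ℝ → ℝ) {x : ℝ} (hx : x ∈ Icc (0:ℝ) 1) :
    ∫ t in (0:ℝ)..x, (Ioo (0:ℝ) 1).indicator f t = ∫ t in Ioc (0:ℝ) x, f t := by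
  rw [intervalIntegral.integral_of_le hx.1, integral_indicator measurableSet_Ioo,
    Measure.restrict_restrict measurableSet_Ioo, inter_comm, setint_eq f hx]

lemma memL2_of_memH10 {ψ : ℝ → ℝ} (hψ : MemH10 ψ) : MemLp (deriv ψ) 2 μ01 :=
  (memLp_two_iff_integrable_sq (measurable_deriv ψ).aestronglyMeasurable).2 hψ.2.2.2

/-- Inner product of the `L²`-class of `deriv ψ` with the indicator of `Ioc 0 x`
recovers `ψ x`. -/
lemma inner_eq_value {ψ : ℝ → ℝ} (hψ : MemH10 ψ) {x : ℝ} (hx : x ∈ Icc (0:ℝ) 1) :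
    ⟪(memL2_of_memH10 hψ).toLp (deriv ψ),
      indicatorConstLp 2 measurableSet_Ioc (measure_ne_top μ01 (Ioc 0 x)) (1:ℝ)⟫ = ψ x := by
  rw [real_inner_comm, L2.inner_indicatorConstLp_one]
  have h1 : ∫ t in Ioc (0:ℝ) x, ((memL2_of_memH10 hψ).toLp (deriv ψ) : ℝ → ℝ) t ∂μ01 =
      ∫ t in Ioc (0:ℝ) x, deriv ψ t ∂μ01 :=
    integral_congr_ae (Filter.EventuallyEq.filter_mono
      ((memL2_of_memH10 hψ).coeFn_toLp) (ae_mono Measure.restrict_le_self))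
  rw [h1]
  have h2 : μ01.restrict (Ioc (0:ℝ) x) = volume.restrict (Ioc (0:ℝ) x ∩ Ioo 0 1) := by
    rw [μ01, Measure.restrict_restrict measurableSet_Ioc]
  rw [show (∫ t in Ioc (0:ℝ) x, deriv ψ t ∂μ01) = ∫ t in Ioc (0:ℝ) x ∩ Ioo 0 1, deriv ψ t by
    rw [← h2], setint_eq _ hx]
  exact (hψ.2.2.1 x hx).symm

lemma norm_indicator_le {x : ℝ} :
    ‖(indicatorConstLp 2 measurableSet_Ioc (measure_ne_top μ01 (Ioc (0:ℝ) x)) (1:ℝ))‖ ≤ 1 := by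
  rw [norm_indicatorConstLp two_ne_zero ENNReal.ofNat_ne_top]
  have hle : μ01 (Ioc (0:ℝ) x) ≤ 1 := by
    rw [μ01, Measure.restrict_apply measurableSet_Ioc]
    calc volume (Ioc (0:ℝ) x ∩ Ioo 0 1) ≤ volume (Ioo (0:ℝ) 1) :=
          measure_mono Set.inter_subset_right
      _ = 1 := by rw [Real.volume_Ioo]; norm_num
  have hμle : (μ01 (Ioc (0:ℝ) x)).toReal ≤ 1 := by
    simpa using ENNReal.toReal_mono ENNReal.one_ne_top hle
  have h2 : ‖(1:ℝ)‖ = 1 := by norm_num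
  rw [h2, one_mul]
  exact Real.rpow_le_one ENNReal.toReal_nonneg hμle (by positivity)

lemma sq_norm_toLp {ψ : ℝ → ℝ} (hψ : MemH10 ψ) :
    ‖(memL2_of_memH10 hψ).toLp (deriv ψ)‖ ^ 2 = ∫ x in Ioo (0:ℝ) 1, deriv ψ x ^ 2 := by
  rw [← real_inner_self_eq_norm_sq, L2.inner_def]
  have : ∫ a, ⟪((memL2_of_memH10 hψ).toLp (deriv ψ) : ℝ → ℝ) a,
      ((memL2_of_memH10 hψ).toLp (deriv ψ) : ℝ → ℝ) a⟫ ∂μ01 =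
      ∫ a, deriv ψ a ^ 2 ∂μ01 := by
    refine integral_congr_ae ?_
    filter_upwards [(memL2_of_memH10 hψ).coeFn_toLp] with a ha
    rw [ha]; simp [RCLike.inner_apply]
  rw [this]; rfl

lemma ftc_ae (f : ℝ → ℝ) (hf : Integrable f) :
    ∀ᵐ x, HasDerivAt (fun y => ∫ t in (0:ℝ)..y, f t) (f x) x := by
  have h := (IsUnifLocDoublingMeasure.vitaliFamily (volume : Measure ℝ) 1).ae_tendsto_average
    hf.locallyIntegrable
  filter_upwards [h] with x hx
  set F : ℝ → ℝ := fun y => ∫ t in (0:ℝ)..y, f t with hF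
  rw [hasDerivAt_iff_tendsto_slope, ← nhdsLT_sup_nhdsGT x, tendsto_sup]
  have key : ∀ y : ℝ, y ≠ x → slope F x y = if y < x then ⨍ t in Icc y x, f t
      else ⨍ t in Icc x y, f t := by
    intro y hy
    rcases lt_or_gt_of_ne hy with hlt | hgt
    · simp only [if_pos hlt]
      rw [slope_comm, slope_def_field, setAverage_eq, integral_Icc_eq_integral_Ioc,
        measureReal_def, Real.volume_Icc, hF]
      have : (∫ t in (0:ℝ)..x, f t) - ∫ t in (0:ℝ)..y, f t = ∫ t in y..x, f t :=
        intervalIntegral.integral_interval_sub_left hf.intervalIntegrable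
          hf.intervalIntegrable
      rw [this, intervalIntegral.integral_of_le hlt.le, ENNReal.toReal_ofReal (by linarith),
        smul_eq_mul, div_eq_inv_mul]
    · simp only [if_neg (not_lt.2 hgt.le)]
      rw [slope_def_field, setAverage_eq, integral_Icc_eq_integral_Ioc, measureReal_def, Real.volume_Icc, hF]
      have : (∫ t in (0:ℝ)..y, f t) - ∫ t in (0:ℝ)..x, f t = ∫ t in x..y, f t :=
        intervalIntegral.integral_interval_sub_left hf.intervalIntegrable
          hf.intervalIntegrable
      rw [this, intervalIntegral.integral_of_le hgt.le, ENNReal.toReal_ofReal (by linarith),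
        smul_eq_mul, div_eq_inv_mul]
  constructor
  · have h1 : Tendsto (fun y => ⨍ t in Icc y x, f t) (𝓝[<] x) (𝓝 (f x)) :=
      hx.comp (Real.tendsto_Icc_vitaliFamily_left x)
    refine h1.congr' ?_
    filter_upwards [self_mem_nhdsWithin] with y (hy : y < x)
    rw [key y hy.ne, if_pos hy]
  · have h1 : Tendsto (fun y => ⨍ t in Icc x y, f t) (𝓝[>] x) (𝓝 (f x)) :=
      hx.comp (Real.tendsto_Icc_vitaliFamily_right x)
    refine h1.congr' ?_
    filter_upwards [self_mem_nhdsWithin] with y (hy : x < y)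
    rw [key y hy.ne', if_neg (not_lt.2 hy.le)]

lemma weak_cpt {H : Type} [NormedAddCommGroup H] [InnerProductSpace ℝ H]
    [CompleteSpace H] [TopologicalSpace.SeparableSpace H] {u : ℕ → H} {C : ℝ}
    (hC : ∀ n, ‖u n‖ ≤ C) :
    ∃ (w : H) (φ : ℕ → ℕ), StrictMono φ ∧
      ∀ v : H, Tendsto (fun n => ⟪u (φ n), v⟫) atTop (𝓝 ⟪w, v⟫) := by
  have hC0 : 0 ≤ C := (norm_nonneg _).trans (hC 0)
  have : Nonempty H := ⟨0⟩
  set d : ℕ → H := TopologicalSpace.denseSeq H with hd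
  have hdd : DenseRange d := TopologicalSpace.denseRange_denseSeq H
  set s : Set (ℕ → ℝ) := univ.pi (fun k => Icc (-(C * ‖d k‖)) (C * ‖d k‖)) with hs
  have hscpt : IsSeqCompact s := (isCompact_univ_pi fun k => isCompact_Icc).isSeqCompact
  have hmem : ∀ n, (fun k => ⟪u n, d k⟫) ∈ s := by
    intro n k _
    have h1 : |⟪u n, d k⟫| ≤ ‖u n‖ * ‖d k‖ := abs_real_inner_le_norm _ _
    have h2 : ‖u n‖ * ‖d k‖ ≤ C * ‖d k‖ :=
      mul_le_mul_of_nonneg_right (hC n) (norm_nonneg _)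
    exact abs_le.1 (h1.trans h2)
  obtain ⟨L, -, φ, hφ, hLtend⟩ := hscpt hmem
  have hLk : ∀ k, Tendsto (fun n => ⟪u (φ n), d k⟫) atTop (𝓝 (L k)) := by
    rw [tendsto_pi_nhds] at hLtend; exact hLtend
  have hcauchy : ∀ v : H, ∃ l : ℝ, Tendsto (fun n => ⟪u (φ n), v⟫) atTop (𝓝 l) := by
    intro v
    refine cauchySeq_tendsto_of_complete ?_
    rw [Metric.cauchySeq_iff]
    intro ε hε
    obtain ⟨k, hk⟩ := hdd.exists_dist_lt v (show (0:ℝ) < ε / (4 * (C + 1)) by positivity)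
    have hkc : CauchySeq (fun n => ⟪u (φ n), d k⟫) := (hLk k).cauchySeq
    rw [Metric.cauchySeq_iff] at hkc
    obtain ⟨N, hN⟩ := hkc (ε / 2) (by positivity)
    refine ⟨N, fun m hm n hn => ?_⟩
    have hvd : ‖v - d k‖ < ε / (4 * (C + 1)) := by
      rw [← dist_eq_norm]; exact hk
    have key : ⟪u (φ m), v⟫ - ⟪u (φ n), v⟫ =
        (⟪u (φ m), d k⟫ - ⟪u (φ n), d k⟫) + ⟪u (φ m) - u (φ n), v - d k⟫ := by
      simp only [inner_sub_left, inner_sub_right]; ring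
    have hbd : |⟪u (φ m) - u (φ n), v - d k⟫| ≤ (2 * C) * (ε / (4 * (C + 1))) := by
      refine (abs_real_inner_le_norm _ _).trans ?_
      have h1 : ‖u (φ m) - u (φ n)‖ ≤ 2 * C := by
        calc ‖u (φ m) - u (φ n)‖ ≤ ‖u (φ m)‖ + ‖u (φ n)‖ := norm_sub_le _ _
        _ ≤ 2 * C := by have := hC (φ m); have := hC (φ n); linarith
      exact mul_le_mul h1 hvd.le (norm_nonneg _) (by positivity)
    have hbd2 : (2 * C) * (ε / (4 * (C + 1))) ≤ ε / 2 := by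
      rw [mul_div_assoc', div_le_div_iff₀ (by positivity) (by norm_num)]
      nlinarith
    have hdk := hN m hm n hn
    rw [Real.dist_eq] at hdk ⊢
    calc |⟪u (φ m), v⟫ - ⟪u (φ n), v⟫|
        ≤ |⟪u (φ m), d k⟫ - ⟪u (φ n), d k⟫| + |⟪u (φ m) - u (φ n), v - d k⟫| := by
          rw [key]; exact abs_add_le _ _
      _ < ε / 2 + ε / 2 := add_lt_add_of_lt_of_le hdk (hbd.trans hbd2)
      _ = ε := by ring
  choose g hg using hcauchy
  have hlin : Tendsto (fun n v => (innerSL ℝ (u (φ n)) : H →L[ℝ] ℝ) v) atTop (𝓝 g) := by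
    rw [tendsto_pi_nhds]; intro v; simpa using hg v
  let T : H →L[ℝ] ℝ := continuousLinearMapOfTendsto (fun n => innerSL ℝ (u (φ n))) hlin
  have hT : ∀ v, T v = g v := fun v => rfl
  refine ⟨(InnerProductSpace.toDual ℝ H).symm T, φ, hφ, fun v => ?_⟩
  rw [InnerProductSpace.toDual_symm_apply, hT]
  exact hg v


lemma G_cont {g : ℝ → ℝ → ℝ} (hgcont : ∀ x : ℝ, Continuous fun ν => g ν x) (x : ℝ) :
    Continuous fun ν => ∫ s in (0:ℝ)..ν, g s x :=
  intervalIntegral.continuous_primitive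
    (fun a b => ((hgcont x)).intervalIntegrable a b) 0

lemma G_bound {g : ℝ → ℝ → ℝ} {M : ℝ} (hgbdd : ∀ ν x : ℝ, |g ν x| ≤ M) (ν x : ℝ) :
    |∫ s in (0:ℝ)..ν, g s x| ≤ M * |ν| := by
  have := intervalIntegral.norm_integral_le_of_norm_le_const
    (C := M) (f := fun s => g s x) (a := 0) (b := ν)
    (fun s _ => hgbdd s x)
  simpa using this

lemma G_meas {g : ℝ → ℝ → ℝ} (hgmeas : ∀ ν : ℝ, Measurable fun x => g ν x)
    (hgcont : ∀ x : ℝ, Continuous fun ν => g ν x) :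
    Measurable (Function.uncurry fun ν x => ∫ s in (0:ℝ)..ν, g s x) := by
  have hg : Measurable (Function.uncurry g) :=
    measurable_uncurry_of_continuous_of_measurable hgcont hgmeas
  refine measurable_uncurry_of_continuous_of_measurable (fun x => G_cont hgcont x) ?_
  intro ν
  have hsw : Measurable fun p : ℝ × ℝ => g p.2 p.1 := hg.comp measurable_swap
  have h1 : ∀ c d : ℝ, Measurable fun x => ∫ s in Ioc c d, g s x :=
    fun c d => (hsw.stronglyMeasurable.integral_prod_right'
      (ν := volume.restrict (Ioc c d))).measurable
  have : (fun x => ∫ s in (0:ℝ)..ν, g s x) =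
      fun x => (∫ s in Ioc 0 ν, g s x) - ∫ s in Ioc ν 0, g s x := by
    funext x; rfl
  rw [this]
  exact (h1 0 ν).sub (h1 ν 0)

lemma h10_version {ψ : ℝ → ℝ} (hψ : MemH10 ψ) :
    Integrable ((Ioo (0:ℝ) 1).indicator (deriv ψ)) volume ∧
    Continuous (fun x => ∫ t in (0:ℝ)..x, (Ioo (0:ℝ) 1).indicator (deriv ψ) t) ∧
    ∀ x ∈ Icc (0:ℝ) 1, ψ x = ∫ t in (0:ℝ)..x, (Ioo (0:ℝ) 1).indicator (deriv ψ) t := by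
  have hi0 : Integrable (deriv ψ) μ01 :=
    (memL2_of_memH10 hψ).integrable one_le_two
  have hio : IntegrableOn (deriv ψ) (Ioo (0:ℝ) 1) volume := hi0
  have hind : Integrable ((Ioo (0:ℝ) 1).indicator (deriv ψ)) volume :=
    (integrable_indicator_iff measurableSet_Ioo).2 hio
  refine ⟨hind, intervalIntegral.continuous_primitive
    (fun a b => hind.intervalIntegrable) 0, fun x hx => ?_⟩
  rw [primitive_indicator_eq _ hx]
  exact hψ.2.2.1 x hx

lemma inner_indicator_general (f : Lp ℝ 2 μ01) {x : ℝ} (hx : x ∈ Icc (0:ℝ) 1) :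
    ⟪f, indicatorConstLp 2 measurableSet_Ioc (measure_ne_top μ01 (Ioc 0 x)) (1:ℝ)⟫ =
      ∫ t in (0:ℝ)..x, (Ioo (0:ℝ) 1).indicator (⇑f) t := by
  rw [real_inner_comm, L2.inner_indicatorConstLp_one, primitive_indicator_eq _ hx]
  have h2 : μ01.restrict (Ioc (0:ℝ) x) = volume.restrict (Ioc (0:ℝ) x ∩ Ioo 0 1) := by
    rw [μ01, Measure.restrict_restrict measurableSet_Ioc]
  rw [show (∫ t in Ioc (0:ℝ) x, f t ∂μ01) = ∫ t in Ioc (0:ℝ) x ∩ Ioo 0 1, f t by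
    rw [← h2], setint_eq _ hx]

lemma jfun_split {g : ℝ → ℝ → ℝ} {M : ℝ} (hgbdd : ∀ ν x : ℝ, |g ν x| ≤ M)
    (hgmeas : ∀ ν : ℝ, Measurable fun x => g ν x)
    (hgcont : ∀ x : ℝ, Continuous fun ν => g ν x)
    (ψ h : ℝ → ℝ) (hcont : Continuous h)
    (hψh : ∀ x ∈ Ioo (0:ℝ) 1, ψ x = h x)
    (hd : IntegrableOn (fun x => deriv ψ x ^ 2) (Ioo (0:ℝ) 1)) :
    Integrable (fun x => ∫ s in (0:ℝ)..(h x), g s x) μ01 ∧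
    AEStronglyMeasurable (fun x => ∫ s in (0:ℝ)..(h x), g s x) μ01 ∧
    Jfun g ψ = 1/2 * (∫ x in Ioo (0:ℝ) 1, deriv ψ x ^ 2) -
      ∫ x, (∫ s in (0:ℝ)..(h x), g s x) ∂μ01 := by
  have hM0 : 0 ≤ M := (abs_nonneg _).trans (hgbdd 0 0)
  obtain ⟨K, hK⟩ := (isCompact_Icc (a := (0:ℝ)) (b := 1)).exists_bound_of_continuousOn
    hcont.continuousOn
  have meas : Measurable fun x => ∫ s in (0:ℝ)..(h x), g s x := by
    have := (G_meas hgmeas hgcont).comp (hcont.measurable.prodMk measurable_id)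
    exact this
  have hbd : ∀ᵐ x ∂μ01, ‖∫ s in (0:ℝ)..(h x), g s x‖ ≤ M * K := by
    filter_upwards [ae_restrict_mem (μ := volume) measurableSet_Ioo] with x hx
    have h1 : |∫ s in (0:ℝ)..(h x), g s x| ≤ M * |h x| := G_bound hgbdd _ _
    have h2 : |h x| ≤ K := hK x (Ioo_subset_Icc_self hx)
    calc ‖∫ s in (0:ℝ)..(h x), g s x‖ ≤ M * |h x| := h1
      _ ≤ M * K := mul_le_mul_of_nonneg_left h2 hM0
  have hint : Integrable (fun x => ∫ s in (0:ℝ)..(h x), g s x) μ01 :=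
    Integrable.mono' (integrable_const (M * K)) meas.aestronglyMeasurable hbd
  refine ⟨hint, meas.aestronglyMeasurable, ?_⟩
  have hd' : Integrable (fun x => deriv ψ x ^ 2) μ01 := hd
  have e0 : Jfun g ψ =
      ∫ x, (1/2 * deriv ψ x ^ 2 - ∫ s in (0:ℝ)..(ψ x), g s x) ∂μ01 := rfl
  have e2 : (∫ x in Ioo (0:ℝ) 1, deriv ψ x ^ 2) = ∫ x, deriv ψ x ^ 2 ∂μ01 := rfl
  have e1 : Jfun g ψ =
      ∫ x, (1/2 * deriv ψ x ^ 2 - ∫ s in (0:ℝ)..(h x), g s x) ∂μ01 := by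
    rw [e0]
    refine integral_congr_ae ?_
    have : ∀ᵐ x ∂μ01, x ∈ Ioo (0:ℝ) 1 := ae_restrict_mem measurableSet_Ioo
    filter_upwards [this] with x hx
    rw [hψh x hx]
  rw [e1, integral_sub ((hd'.const_mul (1/2))) hint, MeasureTheory.integral_const_mul, e2]

lemma sq_norm_lp (f : Lp ℝ 2 μ01) : ‖f‖ ^ 2 = ∫ x, (f x) ^ 2 ∂μ01 := by
  rw [← real_inner_self_eq_norm_sq, L2.inner_def]
  refine integral_congr_ae (Eventually.of_forall fun a => ?_)
  simp [RCLike.inner_apply]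

lemma jfun_bits {g : ℝ → ℝ → ℝ} {M : ℝ} (hgbdd : ∀ ν x : ℝ, |g ν x| ≤ M)
    (hgmeas : ∀ ν : ℝ, Measurable fun x => g ν x)
    (hgcont : ∀ x : ℝ, Continuous fun ν => g ν x)
    {ψ : ℝ → ℝ} (hψ : MemH10 ψ) :
    (∀ x ∈ Icc (0:ℝ) 1, |ψ x| ≤ ‖(memL2_of_memH10 hψ).toLp (deriv ψ)‖) ∧
    1/2 * ‖(memL2_of_memH10 hψ).toLp (deriv ψ)‖ ^ 2
      - M * ‖(memL2_of_memH10 hψ).toLp (deriv ψ)‖ ≤ Jfun g ψ := by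
  have hM0 : 0 ≤ M := (abs_nonneg _).trans (hgbdd 0 0)
  set u := (memL2_of_memH10 hψ).toLp (deriv ψ) with hu
  have hval : ∀ x ∈ Icc (0:ℝ) 1, |ψ x| ≤ ‖u‖ := by
    intro x hx
    rw [← inner_eq_value hψ hx]
    calc |⟪u, indicatorConstLp 2 measurableSet_Ioc (measure_ne_top μ01 (Ioc 0 x)) (1:ℝ)⟫|
        ≤ ‖u‖ * ‖indicatorConstLp 2 measurableSet_Ioc (measure_ne_top μ01 (Ioc 0 x)) (1:ℝ)‖ :=
          abs_real_inner_le_norm _ _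
      _ ≤ ‖u‖ * 1 := mul_le_mul_of_nonneg_left norm_indicator_le (norm_nonneg _)
      _ = ‖u‖ := mul_one _
  refine ⟨hval, ?_⟩
  obtain ⟨hind, hcont, hrep⟩ := h10_version hψ
  obtain ⟨hint, hmeas, hsplit⟩ := jfun_split hgbdd hgmeas hgcont ψ _ hcont
    (fun x hx => hrep x (Ioo_subset_Icc_self hx)) hψ.2.2.2
  rw [hsplit, ← sq_norm_toLp hψ, ← hu]
  have hFb : |∫ x, (∫ s in (0:ℝ)..(∫ t in (0:ℝ)..x, (Ioo (0:ℝ) 1).indicator (deriv ψ) t),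
      g s x) ∂μ01| ≤ M * ‖u‖ := by
    have hb : ∀ᵐ x ∂μ01, ‖∫ s in (0:ℝ)..(∫ t in (0:ℝ)..x, (Ioo (0:ℝ) 1).indicator (deriv ψ) t),
        g s x‖ ≤ M * ‖u‖ := by
      have haem : ∀ᵐ x ∂μ01, x ∈ Ioo (0:ℝ) 1 := ae_restrict_mem measurableSet_Ioo
      filter_upwards [haem] with x hx
      have hx' : x ∈ Icc (0:ℝ) 1 := Ioo_subset_Icc_self hx
      rw [← hrep x hx']
      calc ‖∫ s in (0:ℝ)..(ψ x), g s x‖ ≤ M * |ψ x| := G_bound hgbdd _ _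
        _ ≤ M * ‖u‖ := mul_le_mul_of_nonneg_left (hval x hx') hM0
    have h1 := norm_integral_le_of_norm_le (μ := μ01) (integrable_const (M * ‖u‖)) hb
    have h2 : ∫ (_ : ℝ), M * ‖u‖ ∂μ01 = M * ‖u‖ := by
      rw [integral_const]
      have : (μ01 univ).toReal = 1 := by
        rw [μ01, Measure.restrict_apply_univ, Real.volume_Ioo]; norm_num
      rw [measureReal_def, this, one_smul]
    rw [h2] at h1
    exact h1
  have := abs_le.1 hFb
  linarith [this.1, this.2]

/-- **Existence of a minimizer for the energy functional:** if `g : ℝ × [0,1] → ℝ` is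
bounded, measurable in `x` for each `ν` and continuous in `ν` for each `x`, then `𝒥`
attains its infimum on `H¹₀([0,1])`. -/
theorem exists_minimizer_energy (g : ℝ → ℝ → ℝ) (M : ℝ)
    (hgbdd : ∀ ν x : ℝ, |g ν x| ≤ M)
    (hgmeas : ∀ ν : ℝ, Measurable fun x => g ν x)
    (hgcont : ∀ x : ℝ, Continuous fun ν => g ν x) :
    ∃ ψstar : ℝ → ℝ, MemH10 ψstar ∧ ∀ ψ : ℝ → ℝ, MemH10 ψ → Jfun g ψstar ≤ Jfun g ψ := by
  classical
  have hM0 : 0 ≤ M := (abs_nonneg _).trans (hgbdd 0 0)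
  set S : Set ℝ := Jfun g '' {ψ | MemH10 ψ} with hS
  have h0 : MemH10 (fun _ => 0) := by
    have hd : deriv (fun _ : ℝ => (0:ℝ)) = fun _ => 0 := by funext x; simp
    refine ⟨rfl, rfl, fun x hx => by simp [hd], ?_⟩
    rw [hd]
    simpa using (integrableOn_const (C := (0:ℝ))).2 (Or.inl (by simp))
  have hSne : S.Nonempty := ⟨_, ⟨fun _ => 0, h0, rfl⟩⟩
  have hlow : ∀ a ∈ S, -(M^2)/2 ≤ a := by
    rintro a ⟨ψ, hψ, rfl⟩
    have h2 := (jfun_bits hgbdd hgmeas hgcont hψ).2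
    nlinarith [sq_nonneg (‖(memL2_of_memH10 hψ).toLp (deriv ψ)‖ - M)]
  have hbdd : BddBelow S := ⟨-(M^2)/2, hlow⟩
  set m := sInf S with hm
  have hmem_le : ∀ ψ : ℝ → ℝ, MemH10 ψ → m ≤ Jfun g ψ :=
    fun ψ hψ => csInf_le hbdd ⟨ψ, hψ, rfl⟩
  have hmlow : -(M^2)/2 ≤ m := le_csInf hSne hlow
  -- minimizing sequence
  have hseq : ∀ n : ℕ, ∃ ψ, MemH10 ψ ∧ Jfun g ψ < m + 1/((n:ℝ)+1) := by
    intro n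
    obtain ⟨a, ⟨ψ, hψ, rfl⟩, ha⟩ := Real.lt_sInf_add_pos hSne
      (show (0:ℝ) < 1/((n:ℝ)+1) by positivity)
    exact ⟨ψ, hψ, ha⟩
  choose Ψ0 hΨ0 hJ0 using hseq
  have hJtend : Tendsto (fun n => Jfun g (Ψ0 n)) atTop (𝓝 m) := by
    refine tendsto_of_tendsto_of_tendsto_of_le_of_le (tendsto_const_nhds)
      (by simpa using (tendsto_const_nhds (x := m)).add tendsto_one_div_add_atTop_nhds_zero_nat)
      (fun n => hmem_le _ (hΨ0 n)) (fun n => (hJ0 n).le)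
  set C := M + Real.sqrt (M^2 + 2*(m+1)) with hC
  have hsq : Real.sqrt (M^2 + 2*(m+1)) ^ 2 = M^2 + 2*(m+1) :=
    Real.sq_sqrt (by nlinarith)
  set u : ℕ → Lp ℝ 2 μ01 := fun n => (memL2_of_memH10 (hΨ0 n)).toLp (deriv (Ψ0 n)) with huu
  have hnormle : ∀ n, ‖u n‖ ≤ C := by
    intro n
    have h1 := (jfun_bits hgbdd hgmeas hgcont (hΨ0 n)).2
    have h2 : Jfun g (Ψ0 n) ≤ m + 1 := by
      refine (hJ0 n).le.trans (by
        have : 1/((n:ℝ)+1) ≤ 1 := by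
          rw [div_le_one (by positivity)]; linarith [(Nat.cast_nonneg n : (0:ℝ) ≤ n)]
        linarith)
    have ht0 : (0:ℝ) ≤ ‖u n‖ := norm_nonneg _
    nlinarith [Real.sqrt_nonneg (M^2 + 2*(m+1)),
      sq_nonneg (‖u n‖ - M - Real.sqrt (M^2 + 2*(m+1))),
      sq_nonneg (‖u n‖ - M + Real.sqrt (M^2 + 2*(m+1)))]
  haveI hsep : TopologicalSpace.SeparableSpace (Lp ℝ 2 μ01) := by
    haveI h1 : MeasureTheory.IsSeparable μ01 := by
      set_option synthInstance.maxHeartbeats 1000000 in infer_instance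
    haveI hf : Fact ((2:ℝ≥0∞) ≠ ⊤) := ⟨ENNReal.ofNat_ne_top⟩
    haveI h2 : SecondCountableTopology (Lp ℝ 2 μ01) :=
      set_option synthInstance.maxHeartbeats 1000000 in MeasureTheory.Lp.SecondCountableTopology
    exact TopologicalSpace.SecondCountableTopology.to_separableSpace
  obtain ⟨w, φ, hφ, hweak⟩ := weak_cpt hnormle
  set Ψ : ℕ → ℝ → ℝ := fun n => Ψ0 (φ n) with hΨdef
  set fstar : ℝ → ℝ := (Ioo (0:ℝ) 1).indicator (⇑w) with hfstar
  have hwint : Integrable (⇑w) μ01 := (Lp.memLp w).integrable one_le_two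
  have hwio : IntegrableOn (⇑w) (Ioo (0:ℝ) 1) volume := hwint
  have hfint : Integrable fstar volume := (integrable_indicator_iff measurableSet_Ioo).2 hwio
  set ψs : ℝ → ℝ := fun x => ∫ t in (0:ℝ)..x, fstar t with hψs
  have hψscont : Continuous ψs :=
    intervalIntegral.continuous_primitive (fun a b => hfint.intervalIntegrable) 0
  have hftc : ∀ᵐ x, HasDerivAt ψs (fstar x) x := ftc_ae _ hfint
  have hderiv : deriv ψs =ᵐ[volume] fstar := by
    filter_upwards [hftc] with x hx using hx.deriv
  have hderiva : ∀ᵐ x ∂μ01, deriv ψs x = w x := by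
    have h1 : ∀ᵐ x ∂μ01, deriv ψs x = fstar x := ae_restrict_of_ae hderiv
    have h2 : ∀ᵐ x ∂μ01, x ∈ Ioo (0:ℝ) 1 := ae_restrict_mem measurableSet_Ioo
    filter_upwards [h1, h2] with x hx1 hx2
    rw [hx1, hfstar, indicator_of_mem hx2]
  -- MemH10 for ψs
  have c1 : ψs 0 = 0 := intervalIntegral.integral_same
  have c3 : ∀ x ∈ Icc (0:ℝ) 1, ψs x = ∫ t in Ioc 0 x, deriv ψs t := by
    intro x hx
    have he : ∫ t in Ioc (0:ℝ) x, deriv ψs t = ∫ t in Ioc (0:ℝ) x, fstar t :=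
      integral_congr_ae (ae_restrict_of_ae hderiv)
    rw [he, ← intervalIntegral.integral_of_le hx.1]
  have c4 : IntegrableOn (fun x => deriv ψs x ^ 2) (Ioo (0:ℝ) 1) volume := by
    have h1 : Integrable (fun x => (w x) ^ 2) μ01 := (Lp.memLp w).integrable_sq
    have h2 : Integrable (fun x => deriv ψs x ^ 2) μ01 := by
      refine h1.congr ?_
      filter_upwards [hderiva] with x hx
      rw [hx]
    exact h2
  -- pointwise convergence
  have hpt : ∀ x ∈ Icc (0:ℝ) 1, Tendsto (fun n => Ψ n x) atTop (𝓝 (ψs x)) := by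
    intro x hx
    have h1 : ∀ n : ℕ, Ψ n x =
        ⟪u (φ n), indicatorConstLp 2 measurableSet_Ioc
          (measure_ne_top μ01 (Ioc 0 x)) (1:ℝ)⟫ :=
      fun n => (inner_eq_value (hΨ0 (φ n)) hx).symm
    have h2 := hweak (indicatorConstLp 2 measurableSet_Ioc
      (measure_ne_top μ01 (Ioc 0 x)) (1:ℝ))
    have h3 : ⟪w, indicatorConstLp 2 measurableSet_Ioc
        (measure_ne_top μ01 (Ioc 0 x)) (1:ℝ)⟫ = ψs x :=
      inner_indicator_general w hx
    rw [← h3]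
    exact h2.congr (fun n => (h1 n).symm)
  have c2 : ψs 1 = 0 := by
    have h1 : ∀ n : ℕ, Ψ n 1 = 0 := fun n => (hΨ0 (φ n)).2.1
    have h2 := hpt 1 (right_mem_Icc.2 zero_le_one)
    have h3 : Tendsto (fun n : ℕ => (0:ℝ)) atTop (𝓝 (ψs 1)) :=
      h2.congr (fun n => h1 n)
    exact tendsto_nhds_unique h3 tendsto_const_nhds
  have hψsmem : MemH10 ψs := ⟨c1, c2, c3, c4⟩
  -- uniform bound on the sequence
  have hub : ∀ (n : ℕ), ∀ x ∈ Icc (0:ℝ) 1, |Ψ n x| ≤ C := fun n x hx =>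
    ((jfun_bits hgbdd hgmeas hgcont (hΨ0 (φ n))).1 x hx).trans (hnormle (φ n))
  -- splitting for each member of the sequence
  have split := fun n : ℕ => jfun_split hgbdd hgmeas hgcont (Ψ0 (φ n)) _
      (h10_version (hΨ0 (φ n))).2.1
      (fun x hx => (h10_version (hΨ0 (φ n))).2.2 x (Ioo_subset_Icc_self hx))
      (hΨ0 (φ n)).2.2.2
  set Fstar : ℝ := ∫ x, (∫ s in (0:ℝ)..(ψs x), g s x) ∂μ01 with hFstar
  have hGtend : Tendsto (fun n => ∫ x, (∫ s in (0:ℝ)..(∫ t in (0:ℝ)..x,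
      (Ioo (0:ℝ) 1).indicator (deriv (Ψ0 (φ n))) t), g s x) ∂μ01) atTop (𝓝 Fstar) := by
    rw [hFstar]
    refine tendsto_integral_of_dominated_convergence (fun _ => M * C)
      (fun n => (split n).2.1) (integrable_const _) ?_ ?_
    · intro n
      filter_upwards [(ae_restrict_mem measurableSet_Ioo :
        ∀ᵐ x ∂μ01, x ∈ Ioo (0:ℝ) 1)] with x hx
      have hx' : x ∈ Icc (0:ℝ) 1 := Ioo_subset_Icc_self hx
      rw [← (h10_version (hΨ0 (φ n))).2.2 x hx']
      calc ‖∫ s in (0:ℝ)..(Ψ0 (φ n) x), g s x‖ ≤ M * |Ψ0 (φ n) x| := G_bound hgbdd _ _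
        _ ≤ M * C := mul_le_mul_of_nonneg_left (hub n x hx') hM0
    · filter_upwards [(ae_restrict_mem measurableSet_Ioo :
        ∀ᵐ x ∂μ01, x ∈ Ioo (0:ℝ) 1)] with x hx
      have hx' : x ∈ Icc (0:ℝ) 1 := Ioo_subset_Icc_self hx
      have h1 : Tendsto (fun n => Ψ0 (φ n) x) atTop (𝓝 (ψs x)) := hpt x hx'
      have h2 : Tendsto (fun n => ∫ s in (0:ℝ)..(Ψ0 (φ n) x), g s x) atTop
          (𝓝 (∫ s in (0:ℝ)..(ψs x), g s x)) :=
        ((G_cont hgcont x).tendsto (ψs x)).comp h1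
      refine h2.congr fun n => ?_
      rw [(h10_version (hΨ0 (φ n))).2.2 x hx']
  have hJΨ : Tendsto (fun n => Jfun g (Ψ0 (φ n))) atTop (𝓝 m) := hJtend.comp hφ.tendsto_atTop
  have hT : Tendsto (fun n => ‖u (φ n)‖^2) atTop (𝓝 (2*(m + Fstar))) := by
    have he : ∀ n : ℕ, ‖u (φ n)‖^2 = 2 * (Jfun g (Ψ0 (φ n)) +
        ∫ x, (∫ s in (0:ℝ)..(∫ t in (0:ℝ)..x,
          (Ioo (0:ℝ) 1).indicator (deriv (Ψ0 (φ n))) t), g s x) ∂μ01) := by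
      intro n
      have h3 := (split n).2.2
      have h4 : ‖u (φ n)‖^2 = ∫ x in Ioo (0:ℝ) 1, deriv (Ψ0 (φ n)) x ^ 2 :=
        sq_norm_toLp (hΨ0 (φ n))
      rw [← h4] at h3
      linarith
    exact ((hJΨ.add hGtend).const_mul 2).congr fun n => (he n).symm
  have hTnn : 0 ≤ 2*(m + Fstar) :=
    ge_of_tendsto hT (Eventually.of_forall fun n => sq_nonneg _)
  have hs2 : Real.sqrt (2*(m+Fstar)) ^ 2 = 2*(m+Fstar) := Real.sq_sqrt hTnn
  have htn : Tendsto (fun n => ‖u (φ n)‖) atTop (𝓝 (Real.sqrt (2*(m+Fstar)))) := by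
    have h1 := (Real.continuous_sqrt.tendsto (2*(m+Fstar))).comp hT
    exact h1.congr fun n => by
      simp only [Function.comp_apply]
      exact Real.sqrt_sq (norm_nonneg _)
  have hwle : ‖w‖ ≤ Real.sqrt (2*(m+Fstar)) := by
    have h1 : Tendsto (fun n => ⟪u (φ n), w⟫) atTop (𝓝 (‖w‖^2)) := by
      have := hweak w; rwa [real_inner_self_eq_norm_sq] at this
    have h2 : ‖w‖^2 ≤ Real.sqrt (2*(m+Fstar)) * ‖w‖ :=
      le_of_tendsto_of_tendsto' h1 (htn.mul_const ‖w‖) (fun n => real_inner_le_norm _ _)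
    rcases eq_or_lt_of_le (norm_nonneg w) with h3 | h3
    · rw [← h3]; exact Real.sqrt_nonneg _
    · nlinarith
  have hw2 : ‖w‖^2 ≤ 2*(m+Fstar) := by
    nlinarith [Real.sqrt_nonneg (2*(m+Fstar)), norm_nonneg w]
  obtain ⟨-, -, hsplits⟩ := jfun_split hgbdd hgmeas hgcont ψs ψs hψscont (fun x _ => rfl) c4
  have hTs : (∫ x in Ioo (0:ℝ) 1, deriv ψs x ^ 2) = ‖w‖^2 := by
    have h1 : (∫ x, deriv ψs x ^ 2 ∂μ01) = ∫ x, (w x)^2 ∂μ01 :=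
      integral_congr_ae (by filter_upwards [hderiva] with x hx; rw [hx])
    have h0 : (∫ x in Ioo (0:ℝ) 1, deriv ψs x ^ 2) = ∫ x, deriv ψs x ^ 2 ∂μ01 := rfl
    rw [h0, h1, ← sq_norm_lp]
  have hfinal : Jfun g ψs ≤ m := by
    rw [hsplits, hTs, ← hFstar]
    linarith
  exact ⟨ψs, hψsmem, fun ψ hψ => hfinal.trans (hmem_le ψ hψ)⟩
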